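/- Let ρ, μ, ε > 0. Suppose the penalized bilevel problem attains its optimal value, i.e., there exist x* ∈ X and y* ∈ Y with P̃_μ(x*,y*) = inf_{z∈Y} P̃_μ(x*,z) and f(x*,y*) = f*_μ. If (xε, yε, zε) ∈ X × Y × Y is an ε-optimal solution of the minimax problem min_{(x,y)∈X×Y} max_{z∈Y} P_{ρ,μ}(x,y,z), then P̃_μ(xε,yε) ≤ inf_{z∈Y} P̃_μ(xε,z) + ρ⁻¹(f*_μ − f_low + 2ε) and f(xε,yε) ≤ f*_μ + 2ε. -/

import Mathlib

noncomputable section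

open Set

open scoped RealInnerProductSpace

/-- Euclidean space `ℝⁿ`. -/
abbrev En (n : ℕ) := EuclideanSpace ℝ (Fin n)

/-- Componentwise positive part `[v]₊` of a vector `v ∈ ℝˡ`. -/
def posPart {l : ℕ} (v : En l) : En l := WithLp.toLp 2 (fun i => max (v i) 0)

/-- The Euclidean distance `‖(x,y) − (x',y')‖` on `ℝⁿ × ℝᵐ`. -/
def prodDist {n m : ℕ} (p q : En n × En m) : ℝ :=
  Real.sqrt (‖p.1 - q.1‖ ^ 2 + ‖p.2 - q.2‖ ^ 2)

/-- `φ` is `L`-Lipschitz on `X × Y` (with the Euclidean norm on `ℝⁿ × ℝᵐ`). -/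
def LipOnXY {n m : ℕ} (φ : En n × En m → ℝ) (L : ℝ)
    (X : Set (En n)) (Y : Set (En m)) : Prop :=
  ∀ p ∈ X ×ˢ Y, ∀ q ∈ X ×ˢ Y, |φ p - φ q| ≤ L * prodDist p q

/-- The Slater condition with constant `G`. -/
def Slater {n m l : ℕ} (gt : En n × En m → En l) (X : Set (En n)) (Y : Set (En m))
    (G : ℝ) : Prop :=
  ∀ x ∈ X, ∃ zhat ∈ Y, ∀ i, gt (x, zhat) i ≤ -G

/-- The lower-level value function `f̃*(x) = inf { f̃(x,z) : z ∈ Y, g̃(x,z) ≤ 0 }`. -/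
def ftStar {n m l : ℕ} (ft : En n × En m → ℝ) (gt : En n × En m → En l)
    (Y : Set (En m)) (x : En n) : ℝ :=
  sInf {v | ∃ z ∈ Y, (∀ i, gt (x, z) i ≤ 0) ∧ v = ft (x, z)}

/-- `f̃*_hi = sup_{x ∈ X} f̃*(x)`. -/
def ftStarHi {n m l : ℕ} (ft : En n × En m → ℝ) (gt : En n × En m → En l)
    (X : Set (En n)) (Y : Set (En m)) : ℝ :=
  sSup {v | ∃ x ∈ X, v = ftStar ft gt Y x}

/-- `f̃_low = inf { f̃(x,y) : (x,y) ∈ X × Y }`. -/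
def ftLow {n m : ℕ} (ft : En n × En m → ℝ) (X : Set (En n)) (Y : Set (En m)) : ℝ :=
  sInf {v | ∃ x ∈ X, ∃ y ∈ Y, v = ft (x, y)}

/-- `f̃_hi = sup { f̃(x,y) : (x,y) ∈ X × Y }`. -/
def ftHi {n m : ℕ} (ft : En n × En m → ℝ) (X : Set (En n)) (Y : Set (En m)) : ℝ :=
  sSup {v | ∃ x ∈ X, ∃ y ∈ Y, v = ft (x, y)}

/-- `f_low = inf { f(x,y) : (x,y) ∈ X × Y }`. -/
def fLow {n m : ℕ} (f : En n × En m → ℝ) (X : Set (En n)) (Y : Set (En m)) : ℝ :=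
  sInf {v | ∃ x ∈ X, ∃ y ∈ Y, v = f (x, y)}

/-- `g̃_hi = sup { ‖g̃(x,y)‖ : (x,y) ∈ X × Y }`. -/
def gtHi {n m l : ℕ} (gt : En n × En m → En l) (X : Set (En n)) (Y : Set (En m)) : ℝ :=
  sSup {v | ∃ x ∈ X, ∃ y ∈ Y, v = ‖gt (x, y)‖}

/-- The lower-level penalty function `P̃_μ(x,z) = f̃(x,z) + μ ‖[g̃(x,z)]₊‖²`. -/
def Ptilde {n m l : ℕ} (ft : En n × En m → ℝ) (gt : En n × En m → En l)
    (μ : ℝ) (x : En n) (z : En m) : ℝ :=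
  ft (x, z) + μ * ‖posPart (gt (x, z))‖ ^ 2

/-- `inf_{z ∈ Y} P̃_μ(x,z)`. -/
def PtildeMinVal {n m l : ℕ} (ft : En n × En m → ℝ) (gt : En n × En m → En l)
    (Y : Set (En m)) (μ : ℝ) (x : En n) : ℝ :=
  sInf {w | ∃ z ∈ Y, w = Ptilde ft gt μ x z}

/-- The minimax penalty function `P_{ρ,μ}(x,y,z) = f(x,y) + ρ (P̃_μ(x,y) − P̃_μ(x,z))`. -/
def Prhomu {n m l : ℕ} (f ft : En n × En m → ℝ) (gt : En n × En m → En l)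
    (ρ μ : ℝ) (x : En n) (y z : En m) : ℝ :=
  f (x, y) + ρ * (Ptilde ft gt μ x y - Ptilde ft gt μ x z)

/-- `sup_{z ∈ Y} P_{ρ,μ}(x,y,z)`. -/
def maxPc {n m l : ℕ} (f ft : En n × En m → ℝ) (gt : En n × En m → En l)
    (Y : Set (En m)) (ρ μ : ℝ) (x : En n) (y : En m) : ℝ :=
  sSup {v | ∃ z ∈ Y, v = Prhomu f ft gt ρ μ x y z}

/-- `inf_{(x,y)∈X×Y} sup_{z∈Y} P_{ρ,μ}(x,y,z)`. -/
def minimaxValc {n m l : ℕ} (f ft : En n × En m → ℝ) (gt : En n × En m → En l)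
    (X : Set (En n)) (Y : Set (En m)) (ρ μ : ℝ) : ℝ :=
  sInf {v | ∃ x ∈ X, ∃ y ∈ Y, v = maxPc f ft gt Y ρ μ x y}

/-- `(x,y,z)` is an ε-optimal solution of `min_{(x,y)∈X×Y} max_{z∈Y} P_{ρ,μ}(x,y,z)`. -/
def epsOptimalc {n m l : ℕ} (f ft : En n × En m → ℝ) (gt : En n × En m → En l)
    (X : Set (En n)) (Y : Set (En m)) (ρ μ ε : ℝ) (x : En n) (y z : En m) : Prop :=
  maxPc f ft gt Y ρ μ x y - Prhomu f ft gt ρ μ x y z ≤ ε ∧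
  Prhomu f ft gt ρ μ x y z - minimaxValc f ft gt X Y ρ μ ≤ ε

/-- The constrained bilevel optimal value
`f* = inf { f(x,y) : x ∈ X, y ∈ Y, g̃(x,y) ≤ 0, f̃(x,y) = f̃*(x) }`. -/
def fStarC {n m l : ℕ} (f ft : En n × En m → ℝ) (gt : En n × En m → En l)
    (X : Set (En n)) (Y : Set (En m)) : ℝ :=
  sInf {v | ∃ x ∈ X, ∃ y ∈ Y,
    (∀ i, gt (x, y) i ≤ 0) ∧ ft (x, y) = ftStar ft gt Y x ∧ v = f (x, y)}

/-- The penalized bilevel optimal value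
`f*_μ = inf { f(x,y) : x ∈ X, y ∈ Y, P̃_μ(x,y) = inf_{z∈Y} P̃_μ(x,z) }`. -/
def fStarMu {n m l : ℕ} (f ft : En n × En m → ℝ) (gt : En n × En m → En l)
    (X : Set (En n)) (Y : Set (En m)) (μ : ℝ) : ℝ :=
  sInf {v | ∃ x ∈ X, ∃ y ∈ Y, Ptilde ft gt μ x y = PtildeMinVal ft gt Y μ x ∧ v = f (x, y)}

/-- The set `S_θ(x)` of θ-approximately feasible lower-level minimizers. -/
def Sθ {n m l : ℕ} (ft : En n × En m → ℝ) (gt : En n × En m → En l)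
    (Y : Set (En m)) (θ : ℝ) (x : En n) : Set (En m) :=
  {z | z ∈ Y ∧ ‖posPart (gt (x, z))‖ ≤ θ ∧
    ft (x, z) = sInf {w | ∃ z' ∈ Y, ‖posPart (gt (x, z'))‖ ≤ θ ∧ w = ft (x, z')}}

/-- The error-bound assumption with constants `θbar` and function `ω`. -/
def ErrorBound {n m l : ℕ} (ft : En n × En m → ℝ) (gt : En n × En m → En l)
    (X : Set (En n)) (Y : Set (En m)) (θbar : ℝ) (ω : ℝ → ℝ) : Prop :=
  0 < θbar ∧ (∀ t, 0 ≤ t → 0 ≤ ω t) ∧ (∀ a b, 0 ≤ a → a ≤ b → ω a ≤ ω b) ∧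
    Filter.Tendsto ω (nhdsWithin 0 (Set.Ioi 0)) (nhds 0) ∧
    ∀ x ∈ X, ∀ z ∈ Sθ ft gt Y 0 x, ∀ θ ∈ Set.Icc 0 θbar,
      Metric.infDist z (Sθ ft gt Y θ x) ≤ ω θ

theorem stmt8 {n m l : ℕ} (hn : 0 < n) (hm : 0 < m) (hl : 0 < l)
    (X : Set (En n)) (Y : Set (En m))
    (hXne : X.Nonempty) (hXcpt : IsCompact X)
    (hYne : Y.Nonempty) (hYcpt : IsCompact Y) (hYconv : Convex ℝ Y)
    (f ft : En n × En m → ℝ) (gt : En n × En m → En l)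
    (hfc : ContinuousOn f (X ×ˢ Y)) (hftc : ContinuousOn ft (X ×ˢ Y))
    (hgtc : ContinuousOn gt (X ×ˢ Y))
    (hftconv : ∀ x ∈ X, ConvexOn ℝ Y fun z => ft (x, z))
    (hgtconv : ∀ x ∈ X, ∀ i, ConvexOn ℝ Y fun z => gt (x, z) i)
    (ρ μ ε : ℝ) (hρ : 0 < ρ) (hμ : 0 < μ) (hε : 0 < ε)
    -- the penalized bilevel problem attains its optimal value
    (xstar : En n) (ystar : En m) (hxstar : xstar ∈ X) (hystar : ystar ∈ Y)
    (hopt1 : Ptilde ft gt μ xstar ystar = PtildeMinVal ft gt Y μ xstar)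
    (hopt2 : f (xstar, ystar) = fStarMu f ft gt X Y μ)
    (xe : En n) (ye ze : En m) (hxe : xe ∈ X) (hye : ye ∈ Y) (hze : ze ∈ Y)
    (heps : epsOptimalc f ft gt X Y ρ μ ε xe ye ze) :
    Ptilde ft gt μ xe ye ≤
        PtildeMinVal ft gt Y μ xe + ρ⁻¹ * (fStarMu f ft gt X Y μ - fLow f X Y + 2 * ε) ∧
    f (xe, ye) ≤ fStarMu f ft gt X Y μ + 2 * ε := by
  classical
  obtain ⟨heps1, heps2⟩ := heps
  -- continuity of the lower-level penalty
  have hppc : Continuous (fun v : En l => _root_.posPart v) := by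
    unfold _root_.posPart
    exact (PiLp.continuous_toLp 2 _).comp (continuous_pi fun i =>
      (((continuous_apply i).comp (PiLp.continuous_ofLp 2 _)).max continuous_const))
  have hPtc : ContinuousOn (fun p : En n × En m => Ptilde ft gt μ p.1 p.2) (X ×ˢ Y) := by
    unfold Ptilde
    exact hftc.add (continuousOn_const.mul
      (((hppc.comp_continuousOn hgtc).norm).pow 2))
  obtain ⟨Bp, hBp⟩ := (hXcpt.prod hYcpt).exists_bound_of_continuousOn hPtc
  obtain ⟨Bf, hBf⟩ := (hXcpt.prod hYcpt).exists_bound_of_continuousOn hfc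
  have hPt_lb : ∀ x ∈ X, ∀ z ∈ Y, -Bp ≤ Ptilde ft gt μ x z := by
    intro x hx z hz
    have h := hBp (x, z) ⟨hx, hz⟩
    rw [Real.norm_eq_abs] at h
    exact (abs_le.mp h).1
  have hPt_ub : ∀ x ∈ X, ∀ z ∈ Y, Ptilde ft gt μ x z ≤ Bp := by
    intro x hx z hz
    have h := hBp (x, z) ⟨hx, hz⟩
    rw [Real.norm_eq_abs] at h
    exact (abs_le.mp h).2
  have hf_lb : ∀ x ∈ X, ∀ y ∈ Y, -Bf ≤ f (x, y) := by
    intro x hx y hy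
    have h := hBf (x, y) ⟨hx, hy⟩
    rw [Real.norm_eq_abs] at h
    exact (abs_le.mp h).1
  have hf_ub : ∀ x ∈ X, ∀ y ∈ Y, f (x, y) ≤ Bf := by
    intro x hx y hy
    have h := hBf (x, y) ⟨hx, hy⟩
    rw [Real.norm_eq_abs] at h
    exact (abs_le.mp h).2
  -- the inner sup sets are bounded above
  have hSbdd : ∀ x ∈ X, ∀ y ∈ Y,
      BddAbove {v | ∃ z ∈ Y, v = Prhomu f ft gt ρ μ x y z} := by
    intro x hx y hy
    refine ⟨Bf + ρ * (Bp + Bp), ?_⟩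
    rintro v ⟨z, hz, rfl⟩
    unfold Prhomu
    have h1 := hf_ub x hx y hy
    have h2 := hPt_ub x hx y hy
    have h3 := hPt_lb x hx z hz
    nlinarith [hρ.le]
  -- inner inf set for Ptilde is bounded below
  have hPmbdd : ∀ x ∈ X, BddBelow {w | ∃ z ∈ Y, w = Ptilde ft gt μ x z} := by
    intro x hx
    exact ⟨-Bp, by rintro w ⟨z, hz, rfl⟩; exact hPt_lb x hx z hz⟩
  -- minimax value ≤ maxPc at (xstar, ystar)
  have hminmax_le : minimaxValc f ft gt X Y ρ μ ≤ maxPc f ft gt Y ρ μ xstar ystar := by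
    apply csInf_le
    · refine ⟨-Bf, ?_⟩
      rintro v ⟨x, hx, y, hy, rfl⟩
      have hle : Prhomu f ft gt ρ μ x y y ≤ maxPc f ft gt Y ρ μ x y :=
        le_csSup (hSbdd x hx y hy) ⟨y, hy, rfl⟩
      have hP : Prhomu f ft gt ρ μ x y y = f (x, y) := by unfold Prhomu; ring
      have := hf_lb x hx y hy
      rw [hP] at hle
      linarith
    · exact ⟨xstar, hxstar, ystar, hystar, rfl⟩
  -- maxPc at (xstar, ystar) ≤ f(xstar, ystar)
  have hmax_star : maxPc f ft gt Y ρ μ xstar ystar ≤ f (xstar, ystar) := by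
    refine csSup_le ⟨Prhomu f ft gt ρ μ xstar ystar ystar, ystar, hystar, rfl⟩ ?_
    rintro v ⟨z', hz', rfl⟩
    unfold Prhomu
    have hmin : PtildeMinVal ft gt Y μ xstar ≤ Ptilde ft gt μ xstar z' :=
      csInf_le (hPmbdd xstar hxstar) ⟨z', hz', rfl⟩
    rw [hopt1]
    nlinarith [hρ.le]
  -- key chain of inequalities
  have hchain : ∀ z ∈ Y,
      Prhomu f ft gt ρ μ xe ye z ≤ fStarMu f ft gt X Y μ + 2 * ε := by
    intro z hz
    have hle1 : Prhomu f ft gt ρ μ xe ye z ≤ maxPc f ft gt Y ρ μ xe ye :=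
      le_csSup (hSbdd xe hxe ye hye) ⟨z, hz, rfl⟩
    linarith [hopt2.symm.le]
  have hP_ye : Prhomu f ft gt ρ μ xe ye ye = f (xe, ye) := by unfold Prhomu; ring
  have hc2 : f (xe, ye) ≤ fStarMu f ft gt X Y μ + 2 * ε := by
    have h := hchain ye hye
    rw [hP_ye] at h
    exact h
  have hflow : fLow f X Y ≤ f (xe, ye) :=
    csInf_le ⟨-Bf, by rintro v ⟨x, hx, y, hy, rfl⟩; exact hf_lb x hx y hy⟩
      ⟨xe, hxe, ye, hye, rfl⟩
  refine ⟨?_, hc2⟩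
  have hρ' : (0 : ℝ) < ρ⁻¹ := inv_pos.mpr hρ
  have hkey : Ptilde ft gt μ xe ye - ρ⁻¹ * (fStarMu f ft gt X Y μ - fLow f X Y + 2 * ε)
      ≤ PtildeMinVal ft gt Y μ xe := by
    refine le_csInf ⟨Ptilde ft gt μ xe ye, ye, hye, rfl⟩ ?_
    rintro w ⟨z, hz, rfl⟩
    have h := hchain z hz
    unfold Prhomu at h
    set A := Ptilde ft gt μ xe ye with hA
    set B := Ptilde ft gt μ xe z with hB
    have hd : ρ * (A - B) ≤ fStarMu f ft gt X Y μ - fLow f X Y + 2 * ε := by linarith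
    have h2 := mul_le_mul_of_nonneg_left hd hρ'.le
    rw [← mul_assoc, inv_mul_cancel₀ hρ.ne', one_mul] at h2
    linarith
  linarith
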